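/- Let (G,σ) be a signed graph and C a chordless circuit all of whose edges are positive, with 2 ≤ |δ(V(C))| ≤ 3, where δ(V(C)) is the set of edges with exactly one endvertex in V(C). Let k ≥ 4 be an integer. If the signed graph (G/C, σ) obtained from (G,σ) by contracting C has a nowhere-zero k-flow f, then f can be extended to a nowhere-zero k-flow of (G,σ). -/

import Mathlib

/-- A signed graph: a multigraph (loops and multiple edges allowed) with vertex type `V`
and edge type `E`, where edge `e` joins `fst e` and `snd e`, together with a signature
`sign : E → ℤ` taking values in `{1, -1}`. -/
structure SignedGraph (V E : Type) where
  fst : E → V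
  snd : E → V
  sign : E → ℤ
  sign_unit : ∀ e, sign e = 1 ∨ sign e = -1

namespace SignedGraph

variable {V E : Type}

/-- A circuit in a signed graph: pairwise distinct vertices `vert 0, …, vert (n-1)` and
pairwise distinct edges `edge 0, …, edge (n-1)` with `edge i` joining `vert i` and
`vert ((i+1) % n)`.  (`n = 1` gives a loop, `n = 2` a digon.) -/
structure Circuit (G : SignedGraph V E) where
  n : ℕ
  n_pos : 0 < n
  vert : ℕ → V
  edge : ℕ → E
  vert_inj : ∀ i < n, ∀ j < n, vert i = vert j → i = j
  edge_inj : ∀ i < n, ∀ j < n, edge i = edge j → i = j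
  ends : ∀ i < n,
    (G.fst (edge i) = vert i ∧ G.snd (edge i) = vert ((i + 1) % n)) ∨
    (G.snd (edge i) = vert i ∧ G.fst (edge i) = vert ((i + 1) % n))

namespace Circuit

variable {G : SignedGraph V E}

/-- Edge set of a circuit. -/
def edgeSet (c : Circuit G) : Set E := {e | ∃ i < c.n, c.edge i = e}

/-- Vertex set of a circuit. -/
def vertSet (c : Circuit G) : Set V := {v | ∃ i < c.n, c.vert i = v}

/-- The number of negative edges of a circuit. -/
noncomputable def negCount (c : Circuit G) : ℕ :=
  {i | i < c.n ∧ G.sign (c.edge i) = -1}.ncard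

/-- A circuit is balanced if it contains an even number of negative edges. -/
def IsBalanced (c : Circuit G) : Prop := Even c.negCount

end Circuit

variable (G : SignedGraph V E)

/-- The endpoint of a half edge `(e, b)`: each edge `e` is regarded as the two half
edges `(e, true)` (at `fst e`) and `(e, false)` (at `snd e`). -/
def ep (h : E × Bool) : V := if h.2 then G.fst h.1 else G.snd h.1

/-- An orientation assigns `±1` to each half edge so that the two half edges of an
edge `e` multiply to `- sign e`. -/
def IsOrientation (τ : E × Bool → ℤ) : Prop :=
  (∀ h, τ h = 1 ∨ τ h = -1) ∧ ∀ e : E, τ (e, true) * τ (e, false) = - G.sign e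

/-- The boundary of `(τ, f)` at a vertex `v`: the sum of `τ h * f e` over all half
edges `h` of edges `e` incident with `v`. -/
noncomputable def boundary (τ : E × Bool → ℤ) (f : E → ℤ) (v : V) : ℤ :=
  ∑ᶠ h ∈ {h : E × Bool | G.ep h = v}, τ h * f h.1

/-- `(τ, f)` is a `k`-flow: `τ` is an orientation, `|f e| ≤ k - 1` everywhere, and the
boundary vanishes at every vertex. -/
def IsFlow (k : ℤ) (τ : E × Bool → ℤ) (f : E → ℤ) : Prop :=
  G.IsOrientation τ ∧ (∀ e, |f e| ≤ k - 1) ∧ ∀ v, G.boundary τ f v = 0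

/-- `(τ, f)` is a `ℤ_k`-flow: `τ` is an orientation, `|f e| ≤ k - 1` everywhere, and the
boundary is divisible by `k` at every vertex. -/
def IsZFlow (k : ℤ) (τ : E × Bool → ℤ) (f : E → ℤ) : Prop :=
  G.IsOrientation τ ∧ (∀ e, |f e| ≤ k - 1) ∧ ∀ v, k ∣ G.boundary τ f v

/-- `f` is nowhere-zero. -/
def NowhereZero (_G : SignedGraph V E) (f : E → ℤ) : Prop := ∀ e, f e ≠ 0

/-- `G` admits a nowhere-zero `k`-flow. -/
def HasNZFlow (k : ℤ) : Prop := ∃ τ f, G.IsFlow k τ f ∧ G.NowhereZero f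

/-- `G` is flow-admissible: it admits a nowhere-zero `k`-flow for some integer `k ≥ 2`. -/
def FlowAdmissible : Prop := ∃ k : ℤ, 2 ≤ k ∧ G.HasNZFlow k

/-- The support of `f`. -/
def supp (_G : SignedGraph V E) (f : E → ℤ) : Set E := {e | f e ≠ 0}

/-- The degree of a vertex: the number of half edges incident with it (a loop counts
twice). -/
noncomputable def degree (v : V) : ℕ := {h : E × Bool | G.ep h = v}.ncard

/-- The degree of `v` in the subgraph with edge set `A`. -/
noncomputable def degIn (A : Set E) (v : V) : ℕ :=
  {h : E × Bool | h.1 ∈ A ∧ G.ep h = v}.ncard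

/-- `G` is cubic: every vertex has degree 3. -/
def Cubic : Prop := ∀ v, G.degree v = 3

/-- Adjacency via an edge belonging to `A`. -/
def adjIn (A : Set E) (u v : V) : Prop :=
  ∃ e ∈ A, (G.fst e = u ∧ G.snd e = v) ∨ (G.fst e = v ∧ G.snd e = u)

/-- Reachability inside the subgraph with edge set `A`. -/
def reachIn (A : Set E) : V → V → Prop := Relation.ReflTransGen (G.adjIn A)

/-- `G` is connected. -/
def Connected : Prop := ∀ u v, G.reachIn Set.univ u v

/-- `e` is a bridge (cut edge) of the underlying graph. -/
def IsBridge (e : E) : Prop := ¬ G.reachIn {e' | e' ≠ e} (G.fst e) (G.snd e)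

/-- `G` is bridgeless. -/
def Bridgeless : Prop := ∀ e, ¬ G.IsBridge e

/-- The edge set `A` contains no circuit. -/
def Acyclic (A : Set E) : Prop := ∀ c : Circuit G, ¬ c.edgeSet ⊆ A

/-- Every circuit with all edges in `A` is balanced. -/
def BalancedOn (A : Set E) : Prop := ∀ c : Circuit G, c.edgeSet ⊆ A → c.IsBalanced

/-- `G` is balanced: it contains no unbalanced circuit. -/
def Balanced : Prop := ∀ c : Circuit G, c.IsBalanced

/-- The number of negative edges in `A`. -/
noncomputable def negEdgeCount (A : Set E) : ℕ := {e ∈ A | G.sign e = -1}.ncard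

/-- The edges of the connected component of `v` in the subgraph with edge set `A`. -/
def compEdges (A : Set E) (v : V) : Set E := {e ∈ A | G.reachIn A v (G.fst e)}

/-- The number of (nonempty) components of the subgraph with edge set `A` containing an
odd number of negative edges. -/
noncomputable def oddCompCount (A : Set E) : ℕ :=
  {S : Set E | (∃ v, S = G.compEdges A v) ∧ S.Nonempty ∧ Odd (G.negEdgeCount S)}.ncard

/-- The number of unbalanced circuits (counted by their edge sets) all of whose edges
lie in `A`. -/
noncomputable def unbalCircCount (A : Set E) : ℕ :=
  {S : Set E | ∃ c : Circuit G, c.edgeSet = S ∧ S ⊆ A ∧ ¬ c.IsBalanced}.ncard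

/-- Vertices incident with an edge of `A`. -/
def vertsIn (A : Set E) : Set V := {v | ∃ e ∈ A, G.fst e = v ∨ G.snd e = v}

/-- A proper 3-edge-coloring: edges sharing an endvertex receive different colors. -/
def IsProper3EdgeColoring (col : E → Fin 3) : Prop :=
  ∀ e e', e ≠ e' →
    (G.fst e = G.fst e' ∨ G.fst e = G.snd e' ∨ G.snd e = G.fst e' ∨ G.snd e = G.snd e') →
    col e ≠ col e'

/-- `G` is 3-edge-colorable. -/
def ThreeEdgeColorable : Prop := ∃ col : E → Fin 3, G.IsProper3EdgeColoring col

/-- `G` is hamiltonian: it contains a circuit through all vertices. -/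
def Hamiltonian : Prop := ∃ c : Circuit G, ∀ v : V, v ∈ c.vertSet

end SignedGraph

namespace SignedGraph

/-- The setoid identifying all vertices of the circuit `c`. -/
def contractSetoid {V E : Type} (G : SignedGraph V E) (c : Circuit G) : Setoid V where
  r u v := u = v ∨ (u ∈ c.vertSet ∧ v ∈ c.vertSet)
  iseqv := by
    refine ⟨fun _ => Or.inl rfl, ?_, ?_⟩
    · rintro x y (rfl | ⟨h1, h2⟩)
      · exact Or.inl rfl
      · exact Or.inr ⟨h2, h1⟩
    · rintro x y z (rfl | ⟨h1, h2⟩) (rfl | ⟨h3, h4⟩)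
      · exact Or.inl rfl
      · exact Or.inr ⟨h3, h4⟩
      · exact Or.inr ⟨h1, h2⟩
      · exact Or.inr ⟨h1, h4⟩

/-- `G/C`: the signed graph obtained from `G` by contracting the (all-positive) circuit
`c`, i.e. identifying all the vertices of `c` and deleting its edges; all other edges
keep their signs. -/
def contract {V E : Type} (G : SignedGraph V E) (c : Circuit G) :
    SignedGraph (Quotient (G.contractSetoid c)) {e : E // e ∉ c.edgeSet} where
  fst e := Quotient.mk (G.contractSetoid c) (G.fst e.1)
  snd e := Quotient.mk (G.contractSetoid c) (G.snd e.1)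
  sign e := G.sign e.1
  sign_unit e := G.sign_unit e.1

end SignedGraph
namespace Stmt12

open Classical

lemma boundary_eq_sum {V E : Type} [Fintype E] (G : SignedGraph V E)
    (τ : E × Bool → ℤ) (f : E → ℤ) (v : V)
    [DecidablePred (fun h : E × Bool => G.ep h = v)] :
    G.boundary τ f v
      = ∑ h ∈ Finset.univ.filter (fun h : E × Bool => G.ep h = v), τ h * f h.1 := by
  have hset : {h : E × Bool | G.ep h = v}
      = ↑(Finset.univ.filter (fun h : E × Bool => G.ep h = v)) := by
    ext h; simp
  have hdef : G.boundary τ f v = ∑ᶠ h ∈ {h : E × Bool | G.ep h = v}, τ h * f h.1 := rfl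
  rw [hdef, hset, finsum_mem_coe_finset]

variable {V E : Type} [Fintype E] (G : SignedGraph V E) (c : SignedGraph.Circuit G)

lemma ep_true (e : E) : G.ep (e, true) = G.fst e := by simp [SignedGraph.ep]

lemma ep_false (e : E) : G.ep (e, false) = G.snd e := by simp [SignedGraph.ep]

lemma vert_mem {i : ℕ} (hi : i < c.n) : c.vert i ∈ c.vertSet := ⟨i, hi, rfl⟩

lemma edge_mem {i : ℕ} (hi : i < c.n) : c.edge i ∈ c.edgeSet := ⟨i, hi, rfl⟩

noncomputable def idx (e : E) : ℕ :=
  if h : ∃ i, i < c.n ∧ c.edge i = e then h.choose else 0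

lemma idx_spec {e : E} (he : e ∈ c.edgeSet) : idx G c e < c.n ∧ c.edge (idx G c e) = e := by
  obtain ⟨i, hi, hei⟩ := he
  have hex : ∃ i, i < c.n ∧ c.edge i = e := ⟨i, hi, hei⟩
  have hdef : idx G c e = if h : ∃ i, i < c.n ∧ c.edge i = e then h.choose else 0 := rfl
  rw [hdef, dif_pos hex]
  exact hex.choose_spec

lemma idx_edge {i : ℕ} (hi : i < c.n) : idx G c (c.edge i) = i := by
  have h := idx_spec G c (edge_mem G c hi)
  exact c.edge_inj _ h.1 _ hi h.2

lemma ends_mem {e : E} (he : e ∈ c.edgeSet) :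
    G.fst e ∈ c.vertSet ∧ G.snd e ∈ c.vertSet := by
  obtain ⟨i, hi, rfl⟩ := he
  have h2 : (i + 1) % c.n < c.n := Nat.mod_lt _ c.n_pos
  rcases c.ends i hi with ⟨h1, h1'⟩ | ⟨h1, h1'⟩
  · exact ⟨by rw [h1]; exact vert_mem G c hi, by rw [h1']; exact vert_mem G c h2⟩
  · exact ⟨by rw [h1']; exact vert_mem G c h2, by rw [h1]; exact vert_mem G c hi⟩

noncomputable def delta : Finset E :=
  Finset.univ.filter (fun e =>
    (G.fst e ∈ c.vertSet ∧ G.snd e ∉ c.vertSet) ∨ (G.fst e ∉ c.vertSet ∧ G.snd e ∈ c.vertSet))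

lemma mem_delta {e : E} : e ∈ delta G c ↔
    ((G.fst e ∈ c.vertSet ∧ G.snd e ∉ c.vertSet) ∨
      (G.fst e ∉ c.vertSet ∧ G.snd e ∈ c.vertSet)) := by
  simp [delta]

lemma delta_not_circuit {e : E} (he : e ∈ delta G c) : e ∉ c.edgeSet := by
  intro hc
  have h := ends_mem G c hc
  rw [mem_delta] at he
  tauto

noncomputable def cbool (e : E) : Bool := if G.fst e ∈ c.vertSet then true else false

lemma ep_cbool_mem {e : E} (he : e ∈ delta G c) :
    G.ep (e, cbool G c e) ∈ c.vertSet ∧ G.ep (e, !cbool G c e) ∉ c.vertSet := by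
  rw [mem_delta] at he
  by_cases h : G.fst e ∈ c.vertSet
  · have hb : cbool G c e = true := if_pos h
    rw [hb]
    simp only [Bool.not_true, ep_true, ep_false]
    exact ⟨h, by tauto⟩
  · have hb : cbool G c e = false := if_neg h
    rw [hb]
    simp only [Bool.not_false, ep_true, ep_false]
    exact ⟨by tauto, h⟩

noncomputable def cind (e : E) : ℕ :=
  if h : ∃ i, i < c.n ∧ c.vert i = G.ep (e, cbool G c e) then h.choose else 0

lemma cind_spec {e : E} (he : e ∈ delta G c) :
    cind G c e < c.n ∧ c.vert (cind G c e) = G.ep (e, cbool G c e) := by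
  obtain ⟨i, hi, hv⟩ := (ep_cbool_mem G c he).1
  have hex : ∃ i, i < c.n ∧ c.vert i = G.ep (e, cbool G c e) := ⟨i, hi, hv⟩
  have hdef : cind G c e
      = if h : ∃ i, i < c.n ∧ c.vert i = G.ep (e, cbool G c e) then h.choose else 0 := rfl
  rw [hdef, dif_pos hex]
  exact hex.choose_spec

variable (τ : {e : E // e ∉ c.edgeSet} × Bool → ℤ) (f : {e : E // e ∉ c.edgeSet} → ℤ)

noncomputable def FH (h : E × Bool) : ℤ :=
  if he : h.1 ∈ c.edgeSet then 0 else τ (⟨h.1, he⟩, h.2) * f ⟨h.1, he⟩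

noncomputable def FF (e : E) : ℤ := FH G c τ f (e, cbool G c e)

noncomputable def Aset (j : ℕ) : Finset (E × Bool) :=
  Finset.univ.filter (fun h => h.1 ∉ c.edgeSet ∧ G.ep h = c.vert j)

noncomputable def d (j : ℕ) : ℤ := ∑ h ∈ Aset G c j, FH G c τ f h

noncomputable def S (i : ℕ) : ℤ := ∑ t ∈ Finset.Ico 1 (i + 1), d G c τ f t

lemma S_zero : S G c τ f 0 = 0 := by simp [S]

lemma S_succ (m : ℕ) : S G c τ f (m + 1) = S G c τ f m + d G c τ f (m + 1) := by
  have h1 : S G c τ f (m + 1) = ∑ t ∈ Finset.Ico 1 (m + 1 + 1), d G c τ f t := rfl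
  have h2 : S G c τ f m = ∑ t ∈ Finset.Ico 1 (m + 1), d G c τ f t := rfl
  rw [h1, h2, Finset.sum_Ico_succ_top (Nat.succ_le_succ (Nat.zero_le m))]

section Chordless

variable (hch : ∀ e ∉ c.edgeSet, ¬ (G.fst e ∈ c.vertSet ∧ G.snd e ∈ c.vertSet))

include hch

lemma half_mem {h : E × Bool} (h1 : h.1 ∉ c.edgeSet) (h2 : G.ep h ∈ c.vertSet) :
    h.1 ∈ delta G c ∧ cbool G c h.1 = h.2 := by
  obtain ⟨e, b⟩ := h
  cases b
  · rw [ep_false] at h2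
    have hf : G.fst e ∉ c.vertSet := fun hf => hch e h1 ⟨hf, h2⟩
    exact ⟨(mem_delta G c).2 (Or.inr ⟨hf, h2⟩), by simp [cbool, hf]⟩
  · rw [ep_true] at h2
    have hs : G.snd e ∉ c.vertSet := fun hs => hch e h1 ⟨h2, hs⟩
    exact ⟨(mem_delta G c).2 (Or.inl ⟨h2, hs⟩), by simp [cbool, h2]⟩

lemma mem_Aset_elim {j : ℕ} (hj : j < c.n) {h : E × Bool} (hA : h ∈ Aset G c j) :
    h.1 ∈ delta G c ∧ cbool G c h.1 = h.2 ∧ cind G c h.1 = j := by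
  have hA' : h.1 ∉ c.edgeSet ∧ G.ep h = c.vert j := (Finset.mem_filter.mp hA).2
  obtain ⟨h1, h2⟩ := hA' 
  obtain ⟨hd1, hd2⟩ := half_mem G c hch h1 (h2 ▸ vert_mem G c hj)
  refine ⟨hd1, hd2, ?_⟩
  have hs := cind_spec G c hd1
  apply c.vert_inj _ hs.1 _ hj
  rw [hs.2]
  have heta : ((h.1, cbool G c h.1) : E × Bool) = h := by rw [hd2]
  rw [heta, h2]

lemma d_eq {j : ℕ} (hj : j < c.n) :
    d G c τ f j = ∑ e ∈ (delta G c).filter (fun e => cind G c e = j), FF G c τ f e := by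
  show ∑ h ∈ Aset G c j, FH G c τ f h
      = ∑ e ∈ (delta G c).filter (fun e => cind G c e = j), FF G c τ f e
  refine Finset.sum_nbij' (fun h => h.1) (fun e => (e, cbool G c e)) ?_ ?_ ?_ ?_ ?_
  · intro h hA
    have := mem_Aset_elim G c hch hj hA
    rw [Finset.mem_filter]
    exact ⟨this.1, this.2.2⟩
  · intro e he
    rw [Finset.mem_filter] at he
    have hs := cind_spec G c he.1
    have : (e, cbool G c e) ∈ Aset G c j := by
      rw [Aset, Finset.mem_filter]
      refine ⟨Finset.mem_univ _, delta_not_circuit G c he.1, ?_⟩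
      rw [← hs.2, he.2]
    exact this
  · intro h hA
    have h1 := mem_Aset_elim G c hch hj hA
    show ((h.1, cbool G c h.1) : E × Bool) = h
    rw [h1.2.1]
  · intro e he
    rfl
  · intro h hA
    have h1 := mem_Aset_elim G c hch hj hA
    show FH G c τ f h = FH G c τ f (h.1, cbool G c h.1)
    rw [h1.2.1]

lemma sum_d_subset {I : Finset ℕ} (hI : I ⊆ Finset.range c.n) :
    ∑ t ∈ I, d G c τ f t
      = ∑ e ∈ (delta G c).filter (fun e => cind G c e ∈ I), FF G c τ f e := by
  have hmap : ∀ e ∈ (delta G c).filter (fun e => cind G c e ∈ I), cind G c e ∈ I := by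
    intro e he
    exact (Finset.mem_filter.mp he).2
  have hfib := Finset.sum_fiberwise_of_maps_to (t := I)
    (g := fun e => cind G c e) hmap (FF G c τ f)
  rw [← hfib]
  refine Finset.sum_congr rfl fun t htI => ?_
  have ht : t < c.n := Finset.mem_range.mp (hI htI)
  rw [d_eq G c τ f hch ht]
  refine Finset.sum_congr ?_ fun _ _ => rfl
  ext e
  constructor
  · intro hmem
    have h1 : e ∈ delta G c := (Finset.mem_filter.mp hmem).1
    have h2 : cind G c e = t := (Finset.mem_filter.mp hmem).2
    refine Finset.mem_filter.mpr ⟨Finset.mem_filter.mpr ⟨h1, ?_⟩, h2⟩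
    rw [h2]; exact htI
  · intro hmem
    have h1 := Finset.mem_filter.mp (Finset.mem_filter.mp hmem).1
    exact Finset.mem_filter.mpr ⟨h1.1, (Finset.mem_filter.mp hmem).2⟩

lemma sum_delta_eq_zero
    (hb : (G.contract c).boundary τ f (Quotient.mk (G.contractSetoid c) (c.vert 0)) = 0) :
    ∑ e ∈ delta G c, FF G c τ f e = 0 := by
  haveI : Fintype {e : E // e ∉ c.edgeSet} := Fintype.ofFinite _
  rw [boundary_eq_sum] at hb
  rw [← hb]
  set B : Finset (E × Bool) :=
    Finset.univ.filter (fun h : E × Bool => h.1 ∉ c.edgeSet ∧ G.ep h ∈ c.vertSet) with hB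
  have step1 : ∑ e ∈ delta G c, FF G c τ f e = ∑ h ∈ B, FH G c τ f h := by
    refine Finset.sum_nbij' (fun e => (e, cbool G c e)) (fun h => h.1) ?_ ?_ ?_ ?_ ?_
    · intro e he
      rw [hB, Finset.mem_filter]
      exact ⟨Finset.mem_univ _, delta_not_circuit G c he, (ep_cbool_mem G c he).1⟩
    · intro h hBm
      rw [hB, Finset.mem_filter] at hBm
      exact (half_mem G c hch hBm.2.1 hBm.2.2).1
    · intro e he; rfl
    · intro h hBm
      rw [hB, Finset.mem_filter] at hBm
      have h2 := (half_mem G c hch hBm.2.1 hBm.2.2).2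
      show ((h.1, cbool G c h.1) : E × Bool) = h
      rw [h2]
    · intro e he; rfl
  rw [step1]
  have hv0 : c.vert 0 ∈ c.vertSet := vert_mem G c c.n_pos
  have hbij : ∑ h' ∈ Finset.univ.filter
      (fun h' : {e : E // e ∉ c.edgeSet} × Bool => (G.contract c).ep h' =
        Quotient.mk (G.contractSetoid c) (c.vert 0)), τ h' * f h'.1
      = ∑ h ∈ B, FH G c τ f h := by
    refine Finset.sum_bij (fun h' _ => (h'.1.1, h'.2)) ?_ ?_ ?_ ?_
    · intro h' hm
      rw [Finset.mem_filter] at hm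
      have hep : (G.contract c).ep h' = Quotient.mk (G.contractSetoid c) (G.ep (h'.1.1, h'.2)) := by
        obtain ⟨e', b⟩ := h'
        cases b
        · rfl
        · rfl
      rw [hep] at hm
      have hr := Quotient.exact hm.2
      have hr2 : G.ep (h'.1.1, h'.2) = c.vert 0
          ∨ (G.ep (h'.1.1, h'.2) ∈ c.vertSet ∧ c.vert 0 ∈ c.vertSet) := hr
      rcases hr2 with heq | ⟨hmem, -⟩
      · rw [hB, Finset.mem_filter]
        exact ⟨Finset.mem_univ _, h'.1.2, by rw [heq]; exact hv0⟩
      · rw [hB, Finset.mem_filter]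
        exact ⟨Finset.mem_univ _, h'.1.2, hmem⟩
    · intro h1 hm1 h2 hm2 heq
      obtain ⟨⟨e1, he1⟩, b1⟩ := h1
      obtain ⟨⟨e2, he2⟩, b2⟩ := h2
      simp only [Prod.mk.injEq] at heq ⊢
      exact ⟨Subtype.ext heq.1, heq.2⟩
    · intro h hBm
      rw [hB, Finset.mem_filter] at hBm
      refine ⟨(⟨h.1, hBm.2.1⟩, h.2), ?_, rfl⟩
      rw [Finset.mem_filter]
      refine ⟨Finset.mem_univ _, ?_⟩
      have hep : (G.contract c).ep ((⟨h.1, hBm.2.1⟩ : {e : E // e ∉ c.edgeSet}), h.2)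
          = Quotient.mk (G.contractSetoid c) (G.ep (h.1, h.2)) := by
        obtain ⟨e, b⟩ := h
        cases b
        · rfl
        · rfl
      rw [hep]
      have hmm : G.ep (h.1, h.2) ∈ c.vertSet := hBm.2.2
      exact Quotient.sound (Or.inr ⟨hmm, hv0⟩)
    · intro h' hm
      show τ h' * f h'.1 = FH G c τ f (h'.1.1, h'.2)
      have hdef : FH G c τ f (h'.1.1, h'.2)
          = if he : h'.1.1 ∈ c.edgeSet then 0 else τ (⟨h'.1.1, he⟩, h'.2) * f ⟨h'.1.1, he⟩ := rfl
      rw [hdef, dif_neg h'.1.2]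
  rw [hbij]

lemma sum_d_range
    (hb : (G.contract c).boundary τ f (Quotient.mk (G.contractSetoid c) (c.vert 0)) = 0) :
    ∑ t ∈ Finset.range c.n, d G c τ f t = 0 := by
  rw [sum_d_subset G c τ f hch (Finset.Subset.refl _)]
  have hfull : (delta G c).filter (fun e => cind G c e ∈ Finset.range c.n) = delta G c := by
    refine Finset.filter_true_of_mem fun e he => ?_
    exact Finset.mem_range.mpr (cind_spec G c he).1
  rw [hfull]
  exact sum_delta_eq_zero G c τ f hch hb

end Chordless

variable (k : ℤ)

lemma abs_FF_le (hτu : ∀ h, τ h = 1 ∨ τ h = -1) (hf : ∀ e, |f e| ≤ k - 1) (hk : 1 ≤ k)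
    (e : E) : |FF G c τ f e| ≤ k - 1 := by
  have hdef : FF G c τ f e
      = if he : e ∈ c.edgeSet then 0 else τ (⟨e, he⟩, cbool G c e) * f ⟨e, he⟩ := rfl
  rw [hdef]
  split_ifs with h
  · rw [abs_zero]; omega
  · rcases hτu (⟨e, h⟩, cbool G c e) with h1 | h1 <;>
      rw [h1] <;> simp only [one_mul, neg_one_mul, abs_neg] <;> exact hf _

lemma sum_T_bound_one {T : Finset E} (hT1 : T.card ≤ 1)
    (habs : ∀ e, |FF G c τ f e| ≤ k - 1) (hk : 1 ≤ k) :
    |∑ e ∈ T, FF G c τ f e| ≤ k - 1 := by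
  rcases Nat.le_one_iff_eq_zero_or_eq_one.mp hT1 with h | h
  · rw [Finset.card_eq_zero.mp h, Finset.sum_empty, abs_zero]
    omega
  · obtain ⟨x, rfl⟩ := Finset.card_eq_one.mp h
    rw [Finset.sum_singleton]
    exact habs x

lemma sum_T_bound (hcard : (delta G c).card ≤ 3)
    (hzero : ∑ e ∈ delta G c, FF G c τ f e = 0)
    (habs : ∀ e, |FF G c τ f e| ≤ k - 1) (hk : 1 ≤ k)
    {T : Finset E} (hT : T ⊆ delta G c) :
    |∑ e ∈ T, FF G c τ f e| ≤ k - 1 := by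
  by_cases h1 : T.card ≤ 1
  · exact sum_T_bound_one G c τ f k h1 habs hk
  · have h2 : ((delta G c) \ T).card ≤ 1 := by
      rw [Finset.card_sdiff_of_subset hT]
      have := Finset.card_le_card hT
      omega
    have h3 : ∑ e ∈ (delta G c) \ T, FF G c τ f e = - ∑ e ∈ T, FF G c τ f e := by
      rw [Finset.sum_sdiff_eq_sub hT, hzero]
      ring
    have h4 := sum_T_bound_one G c τ f k h2 habs hk
    rw [h3, abs_neg] at h4
    exact h4

lemma abs_S_sub_le_aux
    (hch : ∀ e ∉ c.edgeSet, ¬ (G.fst e ∈ c.vertSet ∧ G.snd e ∈ c.vertSet))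
    (hcard : (delta G c).card ≤ 3)
    (hzero : ∑ e ∈ delta G c, FF G c τ f e = 0)
    (habs : ∀ e, |FF G c τ f e| ≤ k - 1) (hk : 1 ≤ k)
    {i j : ℕ} (hij : i ≤ j) (hj : j < c.n) :
    |S G c τ f i - S G c τ f j| ≤ k - 1 := by
  have hsplit : S G c τ f i + ∑ t ∈ Finset.Ico (i + 1) (j + 1), d G c τ f t
      = S G c τ f j := by
    have h0 := Finset.sum_Ico_consecutive (d G c τ f)
      (Nat.succ_le_succ (Nat.zero_le i)) (Nat.succ_le_succ hij)
    exact h0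
  have hIsub : Finset.Ico (i + 1) (j + 1) ⊆ Finset.range c.n := by
    intro t ht
    rw [Finset.mem_Ico] at ht
    exact Finset.mem_range.mpr (by omega)
  have h1 : ∑ t ∈ Finset.Ico (i + 1) (j + 1), d G c τ f t
      = ∑ e ∈ (delta G c).filter (fun e => cind G c e ∈ Finset.Ico (i + 1) (j + 1)),
          FF G c τ f e := sum_d_subset G c τ f hch hIsub
  have h2 := sum_T_bound G c τ f k hcard hzero habs hk
    (T := (delta G c).filter (fun e => cind G c e ∈ Finset.Ico (i + 1) (j + 1)))
    (Finset.filter_subset _ _)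
  rw [← h1] at h2
  have : S G c τ f i - S G c τ f j = -(∑ t ∈ Finset.Ico (i + 1) (j + 1), d G c τ f t) := by
    omega
  rw [this, abs_neg]
  exact h2

lemma abs_S_sub_le
    (hch : ∀ e ∉ c.edgeSet, ¬ (G.fst e ∈ c.vertSet ∧ G.snd e ∈ c.vertSet))
    (hcard : (delta G c).card ≤ 3)
    (hzero : ∑ e ∈ delta G c, FF G c τ f e = 0)
    (habs : ∀ e, |FF G c τ f e| ≤ k - 1) (hk : 1 ≤ k)
    {i j : ℕ} (hi : i < c.n) (hj : j < c.n) :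
    |S G c τ f i - S G c τ f j| ≤ k - 1 := by
  rcases le_total i j with h | h
  · exact abs_S_sub_le_aux G c τ f k hch hcard hzero habs hk h hj
  · rw [abs_sub_comm]
    exact abs_S_sub_le_aux G c τ f k hch hcard hzero habs hk h hi

noncomputable def J1 : Finset ℕ := (Finset.Ico 1 c.n).filter (fun j => d G c τ f j ≠ 0)

lemma mem_J1 {j : ℕ} (hj : j ∈ J1 G c τ f) : 1 ≤ j ∧ j < c.n ∧ d G c τ f j ≠ 0 := by
  have hj' : (1 ≤ j ∧ j < c.n) ∧ d G c τ f j ≠ 0 := by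
    have : j ∈ (Finset.Ico 1 c.n).filter (fun j => d G c τ f j ≠ 0) := hj
    simpa [Finset.mem_filter, Finset.mem_Ico] using this
  exact ⟨hj'.1.1, hj'.1.2, hj'.2⟩

lemma fiber_nonempty
    (hch : ∀ e ∉ c.edgeSet, ¬ (G.fst e ∈ c.vertSet ∧ G.snd e ∈ c.vertSet))
    {j : ℕ} (hj : j < c.n) (hd : d G c τ f j ≠ 0) :
    ((delta G c).filter (fun e => cind G c e = j)).Nonempty := by
  rw [Finset.nonempty_iff_ne_empty]
  intro hemp
  apply hd
  rw [d_eq G c τ f hch hj, hemp, Finset.sum_empty]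

lemma Jall_card
    (hch : ∀ e ∉ c.edgeSet, ¬ (G.fst e ∈ c.vertSet ∧ G.snd e ∈ c.vertSet)) :
    ((Finset.range c.n).filter (fun j => d G c τ f j ≠ 0)).card ≤ (delta G c).card := by
  set Jall := (Finset.range c.n).filter (fun j => d G c τ f j ≠ 0) with hJall
  rcases Jall.eq_empty_or_nonempty with hemp | ⟨j0, hj0⟩
  · rw [hemp]; simp
  · have hj0' : j0 < c.n ∧ d G c τ f j0 ≠ 0 := by
      rw [hJall, Finset.mem_filter, Finset.mem_range] at hj0
      exact hj0
    have hne0 := fiber_nonempty G c τ f hch hj0'.1 hj0'.2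
    set e0 := hne0.choose with he0
    refine Finset.card_le_card_of_injOn
      (fun j => if h : ((delta G c).filter (fun e => cind G c e = j)).Nonempty
        then h.choose else e0) ?_ ?_
    · intro j hj
      have hj' : j < c.n ∧ d G c τ f j ≠ 0 := by
        have hj : j ∈ Jall := hj
        rw [hJall, Finset.mem_filter, Finset.mem_range] at hj
        exact hj
      have hne := fiber_nonempty G c τ f hch hj'.1 hj'.2
      show (if h : ((delta G c).filter (fun e => cind G c e = j)).Nonempty
        then h.choose else e0) ∈ delta G c
      rw [dif_pos hne]
      exact Finset.filter_subset _ _ hne.choose_spec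
    · intro j1 hj1 j2 hj2 heq
      have hj1' : j1 < c.n ∧ d G c τ f j1 ≠ 0 := by
        have hmm : j1 ∈ Jall := hj1
        rw [hJall, Finset.mem_filter, Finset.mem_range] at hmm
        exact hmm
      have hj2' : j2 < c.n ∧ d G c τ f j2 ≠ 0 := by
        have hmm : j2 ∈ Jall := hj2
        rw [hJall, Finset.mem_filter, Finset.mem_range] at hmm
        exact hmm
      have hne1 := fiber_nonempty G c τ f hch hj1'.1 hj1'.2
      have hne2 := fiber_nonempty G c τ f hch hj2'.1 hj2'.2
      have heq' : (if h : ((delta G c).filter (fun e => cind G c e = j1)).Nonempty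
            then h.choose else e0)
          = (if h : ((delta G c).filter (fun e => cind G c e = j2)).Nonempty
            then h.choose else e0) := heq
      rw [dif_pos hne1, dif_pos hne2] at heq'
      have h1 := (Finset.mem_filter.mp hne1.choose_spec).2
      have h2 := (Finset.mem_filter.mp hne2.choose_spec).2
      rw [← h1, ← h2, heq']


lemma S_values : ∀ i, i < c.n →
    S G c τ f i = 0 ∨ ∃ j ∈ J1 G c τ f, S G c τ f i = S G c τ f j := by
  intro i
  induction i with
  | zero => intro _; left; exact S_zero G c τ f
  | succ m ih =>
    intro hm
    by_cases hdm : d G c τ f (m + 1) = 0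
    · have : S G c τ f (m + 1) = S G c τ f m := by
        rw [S_succ, hdm, add_zero]
      rw [this]
      exact ih (by omega)
    · right
      refine ⟨m + 1, ?_, rfl⟩
      show m + 1 ∈ (Finset.Ico 1 c.n).filter (fun j => d G c τ f j ≠ 0)
      rw [Finset.mem_filter, Finset.mem_Ico]
      exact ⟨⟨by omega, hm⟩, hdm⟩

lemma select_from
    (hS : ∀ i j, i < c.n → j < c.n → |S G c τ f i - S G c τ f j| ≤ k - 1)
    (hk : 1 ≤ k)
    (J2 : Finset ℕ) (hJ2 : ∀ j ∈ J2, j < c.n) (hc2 : J2.card ≤ 2)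
    (hv : ∀ i, i < c.n → S G c τ f i = 0 ∨ ∃ j ∈ J2, S G c τ f i = S G c τ f j) :
    ∃ a b : ℤ, (∀ i, i < c.n → S G c τ f i = 0 ∨ S G c τ f i = a ∨ S G c τ f i = b) ∧
      |a| ≤ k - 1 ∧ |b| ≤ k - 1 ∧ |a - b| ≤ k - 1 := by
  have hSz : ∀ j, j < c.n → |S G c τ f j| ≤ k - 1 := by
    intro j hj
    have := hS j 0 hj c.n_pos
    rwa [S_zero, sub_zero] at this
  have hcases : J2.card = 0 ∨ J2.card = 1 ∨ J2.card = 2 := by omega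
  rcases hcases with h | h | h
  · refine ⟨0, 0, ?_, by rw [abs_zero]; omega, by rw [abs_zero]; omega,
      by rw [sub_zero, abs_zero]; omega⟩
    intro i hi
    rcases hv i hi with h0 | ⟨j, hj, -⟩
    · exact Or.inl h0
    · rw [Finset.card_eq_zero.mp h] at hj
      exact absurd hj (Finset.notMem_empty _)
  · obtain ⟨x, hx⟩ := Finset.card_eq_one.mp h
    have hxn : x < c.n := hJ2 x (by rw [hx]; exact Finset.mem_singleton_self _)
    refine ⟨S G c τ f x, S G c τ f x, ?_, hSz x hxn, hSz x hxn,
      by rw [sub_self, abs_zero]; omega⟩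
    intro i hi
    rcases hv i hi with h0 | ⟨j, hj, hji⟩
    · exact Or.inl h0
    · rw [hx, Finset.mem_singleton] at hj
      exact Or.inr (Or.inl (hj ▸ hji))
  · obtain ⟨x, y, hxy, hx⟩ := Finset.card_eq_two.mp h
    have hxn : x < c.n := hJ2 x (by rw [hx]; simp)
    have hyn : y < c.n := hJ2 y (by rw [hx]; simp)
    refine ⟨S G c τ f x, S G c τ f y, ?_, hSz x hxn, hSz y hyn, hS x y hxn hyn⟩
    intro i hi
    rcases hv i hi with h0 | ⟨j, hj, hji⟩
    · exact Or.inl h0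
    · rw [hx, Finset.mem_insert, Finset.mem_singleton] at hj
      rcases hj with rfl | rfl
      · exact Or.inr (Or.inl hji)
      · exact Or.inr (Or.inr hji)

lemma exists_ab
    (hch : ∀ e ∉ c.edgeSet, ¬ (G.fst e ∈ c.vertSet ∧ G.snd e ∈ c.vertSet))
    (hcard : (delta G c).card ≤ 3)
    (hb : (G.contract c).boundary τ f (Quotient.mk (G.contractSetoid c) (c.vert 0)) = 0)
    (hτu : ∀ h, τ h = 1 ∨ τ h = -1) (hf : ∀ e, |f e| ≤ k - 1) (hk : 1 ≤ k) :
    ∃ a b : ℤ, (∀ i, i < c.n → S G c τ f i = 0 ∨ S G c τ f i = a ∨ S G c τ f i = b) ∧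
      |a| ≤ k - 1 ∧ |b| ≤ k - 1 ∧ |a - b| ≤ k - 1 := by
  have habs : ∀ e, |FF G c τ f e| ≤ k - 1 := abs_FF_le G c τ f k hτu hf hk
  have hzero : ∑ e ∈ delta G c, FF G c τ f e = 0 := sum_delta_eq_zero G c τ f hch hb
  have hS : ∀ i j, i < c.n → j < c.n → |S G c τ f i - S G c τ f j| ≤ k - 1 :=
    fun i j hi hj => abs_S_sub_le G c τ f k hch hcard hzero habs hk hi hj
  have hJallcard := Jall_card G c τ f hch
  have hJ1sub : J1 G c τ f ⊆ (Finset.range c.n).filter (fun j => d G c τ f j ≠ 0) := by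
    intro j hj
    have h := mem_J1 G c τ f hj
    rw [Finset.mem_filter, Finset.mem_range]
    exact ⟨h.2.1, h.2.2⟩
  have hJ1card : (J1 G c τ f).card ≤ 3 :=
    le_trans (Finset.card_le_card hJ1sub) (le_trans hJallcard hcard)
  by_cases h3 : (J1 G c τ f).card ≤ 2
  · exact select_from G c τ f k hS hk (J1 G c τ f)
      (fun j hj => (mem_J1 G c τ f hj).2.1) h3 (fun i hi => S_values G c τ f i hi)
  · have hc3 : (J1 G c τ f).card = 3 := by omega
    have hJeq : (Finset.range c.n).filter (fun j => d G c τ f j ≠ 0) = J1 G c τ f :=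
      (Finset.eq_of_subset_of_card_le hJ1sub (by omega)).symm
    have hd0 : d G c τ f 0 = 0 := by
      by_contra hd0
      have h0mem : 0 ∈ J1 G c τ f := by
        rw [← hJeq, Finset.mem_filter, Finset.mem_range]
        exact ⟨c.n_pos, hd0⟩
      have := (mem_J1 G c τ f h0mem).1
      omega
    have hne : (J1 G c τ f).Nonempty := Finset.card_pos.mp (by omega)
    set w := (J1 G c τ f).max' hne with hw
    have hwmem : w ∈ J1 G c τ f := Finset.max'_mem _ hne
    have hwn := mem_J1 G c τ f hwmem
    have hrange0 : ∑ t ∈ Finset.range c.n, d G c τ f t = 0 := sum_d_range G c τ f hch hb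
    have hIco : ∑ t ∈ Finset.Ico 1 c.n, d G c τ f t = 0 := by
      rw [Finset.range_eq_Ico, Finset.sum_eq_sum_Ico_succ_bot c.n_pos] at hrange0
      simpa [hd0] using hrange0
    have hSw : S G c τ f w = 0 := by
      have hsplit := Finset.sum_Ico_consecutive (d G c τ f)
        (show 1 ≤ w + 1 by omega) (show w + 1 ≤ c.n by omega)
      have htail : ∑ t ∈ Finset.Ico (w + 1) c.n, d G c τ f t = 0 := by
        refine Finset.sum_eq_zero fun t ht => ?_
        rw [Finset.mem_Ico] at ht
        by_contra hdt
        have htJ : t ∈ J1 G c τ f := by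
          show t ∈ (Finset.Ico 1 c.n).filter (fun j => d G c τ f j ≠ 0)
          rw [Finset.mem_filter, Finset.mem_Ico]
          exact ⟨⟨by omega, ht.2⟩, hdt⟩
        have := Finset.le_max' _ t htJ
        omega
      have hSdef : S G c τ f w = ∑ t ∈ Finset.Ico 1 (w + 1), d G c τ f t := rfl
      rw [hSdef]
      linarith [hsplit, htail, hIco]
    have hcerase : ((J1 G c τ f).erase w).card ≤ 2 := by
      rw [Finset.card_erase_of_mem hwmem]
      omega
    refine select_from G c τ f k hS hk ((J1 G c τ f).erase w)
      (fun j hj => (mem_J1 G c τ f (Finset.mem_of_mem_erase hj)).2.1) hcerase ?_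
    intro i hi
    rcases S_values G c τ f i hi with h0 | ⟨j, hj, hji⟩
    · exact Or.inl h0
    · by_cases hjw : j = w
      · left
        rw [hji, hjw, hSw]
      · exact Or.inr ⟨j, Finset.mem_erase.mpr ⟨hjw, hj⟩, hji⟩

lemma exists_g0 {k a b : ℤ} (hk : 4 ≤ k) (ha : |a| ≤ k - 1) (hb : |b| ≤ k - 1)
    (hab : |a - b| ≤ k - 1) :
    ∃ g0 : ℤ, (g0 ≠ 0 ∧ g0 ≠ a ∧ g0 ≠ b) ∧
      |g0| ≤ k - 1 ∧ |g0 - a| ≤ k - 1 ∧ |g0 - b| ≤ k - 1 := by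
  rw [abs_le] at ha hb hab
  obtain ⟨m, hm1, hm2, hm3, hm4⟩ :
      ∃ m : ℤ, (m = 0 ∨ m = a ∨ m = b) ∧ m ≤ 0 ∧ m ≤ a ∧ m ≤ b := by
    rcases le_total a b with h1 | h1
    · rcases le_total 0 a with h2 | h2
      · exact ⟨0, Or.inl rfl, le_refl _, h2, le_trans h2 h1⟩
      · exact ⟨a, Or.inr (Or.inl rfl), h2, le_refl _, h1⟩
    · rcases le_total 0 b with h2 | h2
      · exact ⟨0, Or.inl rfl, le_refl _, le_trans h2 h1, h2⟩
      · exact ⟨b, Or.inr (Or.inr rfl), h2, h1, le_refl _⟩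
  by_cases c1 : m + 1 ≠ 0 ∧ m + 1 ≠ a ∧ m + 1 ≠ b
  · exact ⟨m + 1, c1, by rw [abs_le]; omega, by rw [abs_le]; omega, by rw [abs_le]; omega⟩
  · have c1' : m + 1 = 0 ∨ m + 1 = a ∨ m + 1 = b := by tauto
    by_cases c2 : m + 2 ≠ 0 ∧ m + 2 ≠ a ∧ m + 2 ≠ b
    · exact ⟨m + 2, c2, by rw [abs_le]; omega, by rw [abs_le]; omega, by rw [abs_le]; omega⟩
    · have c2' : m + 2 = 0 ∨ m + 2 = a ∨ m + 2 = b := by tauto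
      refine ⟨m + 3, ⟨?_, ?_, ?_⟩, by rw [abs_le]; omega, by rw [abs_le]; omega,
        by rw [abs_le]; omega⟩ <;> omega

lemma nat_mod_pred_of_pos {n j : ℕ} (hj1 : 1 ≤ j) (hj : j < n) :
    (j + (n - 1)) % n = j - 1 := by
  have h2 : j + (n - 1) = (j - 1) + n := by omega
  rw [h2, Nat.add_mod_right, Nat.mod_eq_of_lt (by omega)]

lemma nat_mod_pred_zero {n : ℕ} (hn : 0 < n) : (0 + (n - 1)) % n = n - 1 := by
  rw [zero_add, Nat.mod_eq_of_lt (by omega)]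

lemma nat_mod_pred_succ {n j : ℕ} (hn : 0 < n) (hj : j < n) :
    ((j + (n - 1)) % n + 1) % n = j := by
  rcases Nat.eq_zero_or_pos j with rfl | hj1
  · rw [nat_mod_pred_zero hn]
    have h1 : n - 1 + 1 = n := by omega
    rw [h1, Nat.mod_self]
  · rw [nat_mod_pred_of_pos hj1 hj]
    have h1 : j - 1 + 1 = j := by omega
    rw [h1, Nat.mod_eq_of_lt hj]

lemma nat_succ_mod_inj {n i j : ℕ} (hi : i < n) (h : (i + 1) % n = j) :
    i = (j + (n - 1)) % n := by
  rcases Nat.lt_or_ge (i + 1) n with h1 | h1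
  · rw [Nat.mod_eq_of_lt h1] at h
    rw [← h]
    have h2 : i + 1 + (n - 1) = i + n := by omega
    rw [h2, Nat.add_mod_right, Nat.mod_eq_of_lt hi]
  · have h2 : i + 1 = n := by omega
    rw [h2, Nat.mod_self] at h
    rw [← h, nat_mod_pred_zero (by omega)]
    omega

noncomputable def tau' : E × Bool → ℤ := fun h =>
  if he : h.1 ∈ c.edgeSet then
    (if h.2 = true then (if G.fst h.1 = c.vert (idx G c h.1) then 1 else -1)
     else (if G.fst h.1 = c.vert (idx G c h.1) then -1 else 1))
  else τ (⟨h.1, he⟩, h.2)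

noncomputable def f' (g0 : ℤ) : E → ℤ := fun e =>
  if he : e ∈ c.edgeSet then g0 - S G c τ f (idx G c e) else f ⟨e, he⟩

lemma tau'_not_circ {e : E} {b : Bool} (he : e ∉ c.edgeSet) :
    tau' G c τ (e, b) = τ (⟨e, he⟩, b) := dif_neg he

lemma f'_not_circ (g0 : ℤ) {e : E} (he : e ∉ c.edgeSet) :
    f' G c τ f g0 e = f ⟨e, he⟩ := dif_neg he

lemma f'_edge (g0 : ℤ) {i : ℕ} (hi : i < c.n) :
    f' G c τ f g0 (c.edge i) = g0 - S G c τ f i := by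
  have h1 : f' G c τ f g0 (c.edge i) = g0 - S G c τ f (idx G c (c.edge i)) :=
    dif_pos (edge_mem G c hi)
  rw [h1, idx_edge G c hi]

lemma tau'_circ_true {e : E} (he : e ∈ c.edgeSet) :
    tau' G c τ (e, true) = if G.fst e = c.vert (idx G c e) then 1 else -1 := by
  show (if he' : e ∈ c.edgeSet then
      (if (true : Bool) = true then (if G.fst e = c.vert (idx G c e) then (1 : ℤ) else -1)
       else (if G.fst e = c.vert (idx G c e) then -1 else 1))
    else τ (⟨e, he'⟩, true)) = _
  rw [dif_pos he, if_pos rfl]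

lemma tau'_circ_false {e : E} (he : e ∈ c.edgeSet) :
    tau' G c τ (e, false) = if G.fst e = c.vert (idx G c e) then -1 else 1 := by
  show (if he' : e ∈ c.edgeSet then
      (if (false : Bool) = true then (if G.fst e = c.vert (idx G c e) then (1 : ℤ) else -1)
       else (if G.fst e = c.vert (idx G c e) then -1 else 1))
    else τ (⟨e, he'⟩, false)) = _
  rw [dif_pos he, if_neg (by simp)]

noncomputable def tb (j : ℕ) : Bool := if G.fst (c.edge j) = c.vert j then true else false

noncomputable def tl (j : ℕ) : E × Bool := (c.edge j, tb G c j)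

noncomputable def hd (j : ℕ) : E × Bool := (c.edge j, !tb G c j)

lemma ep_tl {j : ℕ} (hj : j < c.n) : G.ep (tl G c j) = c.vert j := by
  have htl : tl G c j = (c.edge j, tb G c j) := rfl
  by_cases hf : G.fst (c.edge j) = c.vert j
  · have hb : tb G c j = true := if_pos hf
    rw [htl, hb, ep_true, hf]
  · have hb : tb G c j = false := if_neg hf
    rw [htl, hb, ep_false]
    rcases c.ends j hj with ⟨h1, -⟩ | ⟨h1, -⟩
    · exact absurd h1 hf
    · exact h1

lemma ep_hd {j : ℕ} (hj : j < c.n) : G.ep (hd G c j) = c.vert ((j + 1) % c.n) := by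
  have hhd : hd G c j = (c.edge j, !tb G c j) := rfl
  by_cases hf : G.fst (c.edge j) = c.vert j
  · have hb : tb G c j = true := if_pos hf
    rw [hhd, hb, Bool.not_true, ep_false]
    rcases c.ends j hj with ⟨-, h2⟩ | ⟨h2, h3⟩
    · exact h2
    · have h4 : c.vert j = c.vert ((j + 1) % c.n) := by rw [← hf, h3]
      rw [h2, h4]
  · have hb : tb G c j = false := if_neg hf
    rw [hhd, hb, Bool.not_false, ep_true]
    rcases c.ends j hj with ⟨h1, -⟩ | ⟨-, h3⟩
    · exact absurd h1 hf
    · exact h3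

lemma tau'_tl {j : ℕ} (hj : j < c.n) : tau' G c τ (tl G c j) = 1 := by
  have he := edge_mem G c hj
  have htl : tl G c j = (c.edge j, tb G c j) := rfl
  by_cases hf : G.fst (c.edge j) = c.vert j
  · have hb : tb G c j = true := if_pos hf
    rw [htl, hb, tau'_circ_true G c τ he, idx_edge G c hj, if_pos hf]
  · have hb : tb G c j = false := if_neg hf
    rw [htl, hb, tau'_circ_false G c τ he, idx_edge G c hj, if_neg hf]

lemma tau'_hd {j : ℕ} (hj : j < c.n) : tau' G c τ (hd G c j) = -1 := by
  have he := edge_mem G c hj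
  have hhd : hd G c j = (c.edge j, !tb G c j) := rfl
  by_cases hf : G.fst (c.edge j) = c.vert j
  · have hb : tb G c j = true := if_pos hf
    rw [hhd, hb, Bool.not_true, tau'_circ_false G c τ he, idx_edge G c hj, if_pos hf]
  · have hb : tb G c j = false := if_neg hf
    rw [hhd, hb, Bool.not_false, tau'_circ_true G c τ he, idx_edge G c hj, if_neg hf]

lemma circ_filter_eq {j : ℕ} (hj : j < c.n) :
    Finset.univ.filter (fun h : E × Bool => G.ep h = c.vert j ∧ h.1 ∈ c.edgeSet)
      = {tl G c j, hd G c ((j + (c.n - 1)) % c.n)} := by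
  have hp : (j + (c.n - 1)) % c.n < c.n := Nat.mod_lt _ c.n_pos
  ext h
  simp only [Finset.mem_filter, Finset.mem_univ, true_and, Finset.mem_insert,
    Finset.mem_singleton]
  constructor
  · rintro ⟨hep, i, hi, hie⟩
    obtain ⟨e, bb⟩ := h
    have he : e = c.edge i := hie.symm
    subst he
    by_cases hbb : bb = tb G c i
    · subst hbb
      left
      have h1 : G.ep (tl G c i) = c.vert j := hep
      rw [ep_tl G c hi] at h1
      have hij : i = j := c.vert_inj i hi j hj h1
      show ((c.edge i, tb G c i) : E × Bool) = tl G c j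
      rw [hij]
      rfl
    · have hbb' : bb = !tb G c i := by
        cases bb <;> cases htb : tb G c i
        · exact absurd htb.symm hbb
        · rfl
        · rfl
        · exact absurd htb.symm hbb
      subst hbb'
      right
      have h1 : G.ep (hd G c i) = c.vert j := hep
      rw [ep_hd G c hi] at h1
      have h2 : (i + 1) % c.n = j :=
        c.vert_inj _ (Nat.mod_lt _ c.n_pos) j hj h1
      have h3 : i = (j + (c.n - 1)) % c.n := nat_succ_mod_inj hi h2
      show ((c.edge i, !tb G c i) : E × Bool) = hd G c ((j + (c.n - 1)) % c.n)
      rw [h3]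
      rfl
  · rintro (rfl | rfl)
    · exact ⟨ep_tl G c hj, edge_mem G c hj⟩
    · refine ⟨?_, edge_mem G c hp⟩
      rw [ep_hd G c hp, nat_mod_pred_succ c.n_pos hj]

lemma tl_ne_hd {j : ℕ} (hj : j < c.n) :
    tl G c j ≠ hd G c ((j + (c.n - 1)) % c.n) := by
  have hp : (j + (c.n - 1)) % c.n < c.n := Nat.mod_lt _ c.n_pos
  by_cases hn1 : c.n = 1
  · have hj0 : j = 0 := by omega
    have hp0 : (j + (c.n - 1)) % c.n = 0 := by rw [hn1]; exact Nat.mod_one _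
    subst hj0
    rw [hp0]
    intro hcon
    have hcon2 : ((c.edge 0, tb G c 0) : E × Bool) = (c.edge 0, !tb G c 0) := hcon
    rw [Prod.ext_iff] at hcon2
    have h2 := hcon2.2
    cases htb : tb G c 0 <;> rw [htb] at h2 <;> simp at h2
  · intro hcon
    have hcon2 : ((c.edge j, tb G c j) : E × Bool)
        = (c.edge ((j + (c.n - 1)) % c.n), !tb G c ((j + (c.n - 1)) % c.n)) := hcon
    rw [Prod.ext_iff] at hcon2
    have h1 : c.edge j = c.edge ((j + (c.n - 1)) % c.n) := hcon2.1
    have h2 : j = (j + (c.n - 1)) % c.n := c.edge_inj j hj _ hp h1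
    have h3 := nat_mod_pred_succ c.n_pos hj
    rw [← h2] at h3
    rcases Nat.lt_or_ge (j + 1) c.n with h4 | h4
    · rw [Nat.mod_eq_of_lt h4] at h3
      omega
    · have h5 : j + 1 = c.n := by omega
      rw [h5, Nat.mod_self] at h3
      omega

lemma boundary_vert (g0 : ℤ)
    (hsum0 : ∑ t ∈ Finset.range c.n, d G c τ f t = 0)
    {j : ℕ} (hj : j < c.n) :
    G.boundary (tau' G c τ) (f' G c τ f g0) (c.vert j) = 0 := by
  set p := (j + (c.n - 1)) % c.n with hpdef
  have hp : p < c.n := Nat.mod_lt _ c.n_pos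
  rw [boundary_eq_sum]
  rw [← Finset.sum_filter_add_sum_filter_not
    (Finset.univ.filter (fun h : E × Bool => G.ep h = c.vert j))
    (fun h => h.1 ∈ c.edgeSet)]
  have hset1 : (Finset.univ.filter (fun h : E × Bool => G.ep h = c.vert j)).filter
      (fun h => h.1 ∈ c.edgeSet)
      = Finset.univ.filter (fun h : E × Bool => G.ep h = c.vert j ∧ h.1 ∈ c.edgeSet) := by
    rw [Finset.filter_filter]
  have hset2 : (Finset.univ.filter (fun h : E × Bool => G.ep h = c.vert j)).filter
      (fun h => ¬ h.1 ∈ c.edgeSet) = Aset G c j := by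
    rw [Finset.filter_filter, Aset]
    ext h
    simp only [Finset.mem_filter, Finset.mem_univ, true_and]
    tauto
  rw [hset1, hset2, circ_filter_eq G c hj,
    Finset.sum_pair (tl_ne_hd G c hj)]
  have htl1 : (tl G c j).1 = c.edge j := rfl
  have hhd1 : (hd G c p).1 = c.edge p := rfl
  rw [htl1, hhd1, tau'_tl G c τ hj, tau'_hd G c τ hp,
    f'_edge G c τ f g0 hj, f'_edge G c τ f g0 hp]
  have hA : ∑ h ∈ Aset G c j, tau' G c τ h * f' G c τ f g0 h.1 = d G c τ f j := by
    refine Finset.sum_congr rfl fun h hA => ?_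
    have hnc : h.1 ∉ c.edgeSet := (Finset.mem_filter.mp hA).2.1
    have h1 : tau' G c τ h = τ (⟨h.1, hnc⟩, h.2) := tau'_not_circ G c τ hnc
    have h2 : f' G c τ f g0 h.1 = f ⟨h.1, hnc⟩ := f'_not_circ G c τ f g0 hnc
    have hdef : FH G c τ f h
        = if he : h.1 ∈ c.edgeSet then 0 else τ (⟨h.1, he⟩, h.2) * f ⟨h.1, he⟩ := rfl
    rw [h1, h2, hdef, dif_neg hnc]
  rw [hA]
  -- goal : 1 * (g0 - S j) + -1 * (g0 - S p) + d j = 0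
  have hgoal : S G c τ f j = S G c τ f p + d G c τ f j := by
    rcases Nat.eq_zero_or_pos j with rfl | hj1
    · have hpval : p = c.n - 1 := by rw [hpdef, nat_mod_pred_zero c.n_pos]
      have hS0 : S G c τ f 0 = 0 := S_zero G c τ f
      have hSp : S G c τ f p = ∑ t ∈ Finset.Ico 1 c.n, d G c τ f t := by
        rw [hpval]
        have hnn : c.n - 1 + 1 = c.n := by omega
        have hdef : S G c τ f (c.n - 1)
            = ∑ t ∈ Finset.Ico 1 (c.n - 1 + 1), d G c τ f t := rfl
        rw [hdef, hnn]
      have hIco : d G c τ f 0 + ∑ t ∈ Finset.Ico 1 c.n, d G c τ f t = 0 := by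
        rw [Finset.range_eq_Ico, Finset.sum_eq_sum_Ico_succ_bot c.n_pos] at hsum0
        simpa using hsum0
      rw [hS0, hSp]
      linarith
    · have hpval : p = j - 1 := by rw [hpdef, nat_mod_pred_of_pos hj1 hj]
      have hsucc : j - 1 + 1 = j := by omega
      have : S G c τ f j = S G c τ f (j - 1) + d G c τ f j := by
        conv_lhs => rw [← hsucc]
        rw [S_succ, hsucc]
      rw [this, hpval]
  rw [hgoal]
  ring

lemma boundary_out [Fintype V] (g0 : ℤ) {v : V} (hv : v ∉ c.vertSet)
    (hb : (G.contract c).boundary τ f (Quotient.mk (G.contractSetoid c) v) = 0) :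
    G.boundary (tau' G c τ) (f' G c τ f g0) v = 0 := by
  haveI : Fintype {e : E // e ∉ c.edgeSet} := Fintype.ofFinite _
  rw [boundary_eq_sum] at hb ⊢
  rw [← hb]
  have hnc : ∀ h : E × Bool, G.ep h = v → h.1 ∉ c.edgeSet := by
    intro h hep hmem
    have hends := ends_mem G c hmem
    obtain ⟨e, b⟩ := h
    cases b
    · rw [ep_false] at hep
      exact hv (hep ▸ hends.2)
    · rw [ep_true] at hep
      exact hv (hep ▸ hends.1)
  refine Finset.sum_bij
    (fun (h : E × Bool) (hm : h ∈ Finset.univ.filter (fun h : E × Bool => G.ep h = v)) =>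
      ((⟨h.1, hnc h (Finset.mem_filter.mp hm).2⟩ : {e : E // e ∉ c.edgeSet}), h.2))
    ?_ ?_ ?_ ?_
  · intro h hm
    rw [Finset.mem_filter]
    refine ⟨Finset.mem_univ _, ?_⟩
    have hep : (G.contract c).ep
        ((⟨h.1, hnc h (Finset.mem_filter.mp hm).2⟩ : {e : E // e ∉ c.edgeSet}), h.2)
        = Quotient.mk (G.contractSetoid c) (G.ep h) := by
      obtain ⟨e, b⟩ := h
      cases b <;> rfl
    show (G.contract c).ep
        ((⟨h.1, hnc h (Finset.mem_filter.mp hm).2⟩ : {e : E // e ∉ c.edgeSet}), h.2)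
        = Quotient.mk (G.contractSetoid c) v
    rw [hep, (Finset.mem_filter.mp hm).2]
  · intro h1 hm1 h2 hm2 heq
    rw [Prod.ext_iff] at heq
    have he1 : h1.1 = h2.1 := congrArg Subtype.val heq.1
    exact Prod.ext he1 heq.2
  · intro h' hm'
    rw [Finset.mem_filter] at hm'
    have hep : (G.contract c).ep h'
        = Quotient.mk (G.contractSetoid c) (G.ep (h'.1.1, h'.2)) := by
      obtain ⟨e', b⟩ := h'
      cases b <;> rfl
    rw [hep] at hm'
    have hr := Quotient.exact hm'.2
    have hr2 : G.ep (h'.1.1, h'.2) = v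
        ∨ (G.ep (h'.1.1, h'.2) ∈ c.vertSet ∧ v ∈ c.vertSet) := hr
    have hepv : G.ep (h'.1.1, h'.2) = v := by
      rcases hr2 with heq | ⟨-, hvmem⟩
      · exact heq
      · exact absurd hvmem hv
    refine ⟨(h'.1.1, h'.2), ?_, ?_⟩
    · rw [Finset.mem_filter]
      exact ⟨Finset.mem_univ _, hepv⟩
    · obtain ⟨⟨e', he'⟩, b⟩ := h'
      rfl
  · intro h hm
    have hnch := hnc h (Finset.mem_filter.mp hm).2
    show tau' G c τ h * f' G c τ f g0 h.1
        = τ ((⟨h.1, hnc h (Finset.mem_filter.mp hm).2⟩ : {e : E // e ∉ c.edgeSet}), h.2)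
          * f ⟨h.1, hnc h (Finset.mem_filter.mp hm).2⟩
    have h1 : tau' G c τ h = τ (⟨h.1, hnch⟩, h.2) := tau'_not_circ G c τ hnch
    have h2 : f' G c τ f g0 h.1 = f ⟨h.1, hnch⟩ := f'_not_circ G c τ f g0 hnch
    rw [h1, h2]

lemma tau'_orient (hpos : ∀ e ∈ c.edgeSet, G.sign e = 1)
    (hτ : (G.contract c).IsOrientation τ) : G.IsOrientation (tau' G c τ) := by
  constructor
  · intro h
    obtain ⟨e, b⟩ := h
    by_cases he : e ∈ c.edgeSet
    · cases b
      · rw [tau'_circ_false G c τ he]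
        split_ifs
        · right; rfl
        · left; rfl
      · rw [tau'_circ_true G c τ he]
        split_ifs
        · left; rfl
        · right; rfl
    · rw [tau'_not_circ G c τ he]
      exact hτ.1 _
  · intro e
    by_cases he : e ∈ c.edgeSet
    · rw [tau'_circ_true G c τ he, tau'_circ_false G c τ he, hpos e he]
      split_ifs <;> ring
    · rw [tau'_not_circ G c τ he, tau'_not_circ G c τ he]
      exact hτ.2 ⟨e, he⟩

end Stmt12

/-- Let `C` be a chordless circuit of `(G,σ)` whose edges are all
positive with `2 ≤ |δ(V(C))| ≤ 3`, and let `k ≥ 4`. Every nowhere-zero `k`-flow of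
`(G/C, σ)` extends to a nowhere-zero `k`-flow of `(G,σ)`. -/
theorem stmt_12 {V E : Type} [Fintype V] [Fintype E] (G : SignedGraph V E)
    (c : SignedGraph.Circuit G)
    (hchordless : ∀ e ∉ c.edgeSet, ¬ (G.fst e ∈ c.vertSet ∧ G.snd e ∈ c.vertSet))
    (hpos : ∀ e ∈ c.edgeSet, G.sign e = 1)
    (hδ₁ : 2 ≤ ({e | (G.fst e ∈ c.vertSet ∧ G.snd e ∉ c.vertSet) ∨
      (G.fst e ∉ c.vertSet ∧ G.snd e ∈ c.vertSet)} : Set E).ncard)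
    (hδ₂ : ({e | (G.fst e ∈ c.vertSet ∧ G.snd e ∉ c.vertSet) ∨
      (G.fst e ∉ c.vertSet ∧ G.snd e ∈ c.vertSet)} : Set E).ncard ≤ 3)
    (k : ℤ) (hk : 4 ≤ k)
    (τ : {e : E // e ∉ c.edgeSet} × Bool → ℤ) (f : {e : E // e ∉ c.edgeSet} → ℤ)
    (hflow : (G.contract c).IsFlow k τ f) (hnz : (G.contract c).NowhereZero f) :
    ∃ τ' f', G.IsFlow k τ' f' ∧ G.NowhereZero f' ∧
      ∀ (e : E) (he : e ∉ c.edgeSet),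
        f' e = f ⟨e, he⟩ ∧ ∀ b, τ' (e, b) = τ (⟨e, he⟩, b) := by
  classical
  have hτor : (G.contract c).IsOrientation τ := hflow.1
  have hfb : ∀ e, |f e| ≤ k - 1 := hflow.2.1
  have hbz : ∀ v, (G.contract c).boundary τ f v = 0 := hflow.2.2
  have hτu : ∀ h, τ h = 1 ∨ τ h = -1 := hτor.1
  have hk1 : (1 : ℤ) ≤ k := by omega
  have hcard : (Stmt12.delta G c).card ≤ 3 := by
    have hset : ({e | (G.fst e ∈ c.vertSet ∧ G.snd e ∉ c.vertSet) ∨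
        (G.fst e ∉ c.vertSet ∧ G.snd e ∈ c.vertSet)} : Set E) = ↑(Stmt12.delta G c) := by
      ext e
      simp [Stmt12.mem_delta]
    rw [hset, Set.ncard_coe_finset] at hδ₂
    exact hδ₂
  have hb0 := hbz (Quotient.mk (G.contractSetoid c) (c.vert 0))
  obtain ⟨a, b, hvals, ha, hb, hab⟩ :=
    Stmt12.exists_ab G c τ f k hchordless hcard hb0 hτu hfb hk1
  obtain ⟨g0, ⟨hg1, hg2, hg3⟩, hga, hgb, hgc⟩ := Stmt12.exists_g0 hk ha hb hab
  have hgS : ∀ i, i < c.n →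
      g0 - Stmt12.S G c τ f i ≠ 0 ∧ |g0 - Stmt12.S G c τ f i| ≤ k - 1 := by
    intro i hi
    rcases hvals i hi with h | h | h <;> rw [h]
    · exact ⟨by omega, by rwa [sub_zero]⟩
    · exact ⟨fun hc => hg2 (by omega), hgb⟩
    · exact ⟨fun hc => hg3 (by omega), hgc⟩
  have hsum0 : ∑ t ∈ Finset.range c.n, Stmt12.d G c τ f t = 0 :=
    Stmt12.sum_d_range G c τ f hchordless hb0
  refine ⟨Stmt12.tau' G c τ, Stmt12.f' G c τ f g0, ⟨?_, ?_, ?_⟩, ?_, ?_⟩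
  · exact Stmt12.tau'_orient G c τ hpos hτor
  · intro e
    by_cases he : e ∈ c.edgeSet
    · obtain ⟨i, hi, rfl⟩ := he
      rw [Stmt12.f'_edge G c τ f g0 hi]
      exact (hgS i hi).2
    · rw [Stmt12.f'_not_circ G c τ f g0 he]
      exact hfb _
  · intro v
    by_cases hv : v ∈ c.vertSet
    · obtain ⟨j, hj, rfl⟩ := hv
      exact Stmt12.boundary_vert G c τ f g0 hsum0 hj
    · exact Stmt12.boundary_out G c τ f g0 hv (hbz _)
  · intro e
    by_cases he : e ∈ c.edgeSet
    · obtain ⟨i, hi, rfl⟩ := he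
      rw [Stmt12.f'_edge G c τ f g0 hi]
      exact (hgS i hi).1
    · rw [Stmt12.f'_not_circ G c τ f g0 he]
      exact hnz _
  · intro e he
    exact ⟨Stmt12.f'_not_circ G c τ f g0 he, fun b => Stmt12.tau'_not_circ G c τ he⟩
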